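/- If D is an n×n Euclidean distance matrix of rank r with not all points equal, then D has exactly one positive eigenvalue, n−r zero eigenvalues, and r−1 negative eigenvalues. -/

import Mathlib

open Matrix BigOperators Finset

section Aux

open RealInnerProductSpace

private lemma edm_quadform_nonpos {n d : ℕ} (x : Fin n → EuclideanSpace ℝ (Fin d))
    (v : Fin n → ℝ) (hv : ∑ i, v i = 0) :
    v ⬝ᵥ ((Matrix.of fun i j => ‖x i - x j‖ ^ 2 : Matrix (Fin n) (Fin n) ℝ) *ᵥ v) ≤ 0 := by
  have expand : ∀ i j : Fin n, ‖x i - x j‖ ^ 2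
      = ‖x i‖ ^ 2 - 2 * ⟪x i, x j⟫ + ‖x j‖ ^ 2 := fun i j => by
    rw [norm_sub_sq_real]
  have h1 : ∑ i, ∑ j, v i * v j * (‖x i‖ ^ 2 + ‖x j‖ ^ 2) = 0 := by
    calc ∑ i, ∑ j, v i * v j * (‖x i‖ ^ 2 + ‖x j‖ ^ 2)
        = ∑ i, (v i * ‖x i‖ ^ 2 * ∑ j, v j + v i * ∑ j, v j * ‖x j‖ ^ 2) := by
          refine Finset.sum_congr rfl fun i _ => ?_
          rw [Finset.mul_sum, Finset.mul_sum, ← Finset.sum_add_distrib]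
          exact Finset.sum_congr rfl fun j _ => by ring
      _ = 0 := by
          simp only [hv, mul_zero, zero_add]
          rw [← Finset.sum_mul, hv, zero_mul]
  have h2 : ∑ i, ∑ j, v i * v j * ⟪x i, x j⟫ = ⟪(∑ i, v i • x i), (∑ j, v j • x j)⟫ := by
    rw [sum_inner]
    refine Finset.sum_congr rfl fun i _ => ?_
    rw [inner_sum]
    refine Finset.sum_congr rfl fun j _ => ?_
    rw [real_inner_smul_left, real_inner_smul_right]; ring
  have key : v ⬝ᵥ ((Matrix.of fun i j => ‖x i - x j‖ ^ 2 : Matrix (Fin n) (Fin n) ℝ) *ᵥ v)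
      = (∑ i, ∑ j, v i * v j * (‖x i‖ ^ 2 + ‖x j‖ ^ 2))
        - 2 * ∑ i, ∑ j, v i * v j * ⟪x i, x j⟫ := by
    simp only [dotProduct, mulVec, dotProduct, Matrix.of_apply, Finset.mul_sum, Finset.sum_mul,
      ← Finset.sum_sub_distrib]
    refine Finset.sum_congr rfl fun i _ => Finset.sum_congr rfl fun j _ => ?_
    rw [expand i j]; ring
  rw [key, h1, h2, zero_sub, neg_nonpos]
  have := real_inner_self_nonneg (x := (∑ i, v i • x i))
  linarith

end Aux

/-- A Euclidean distance matrix of rank `r` (with not all points equal) has exactly one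
positive eigenvalue, `n - r` zero eigenvalues, and `r - 1` negative eigenvalues. -/
theorem edm_eigenvalue_signs (n d : ℕ)
    (x : Fin n → EuclideanSpace ℝ (Fin d))
    (D : Matrix (Fin n) (Fin n) ℝ)
    (hD : D = Matrix.of fun i j => ‖x i - x j‖ ^ 2)
    (hx : ∃ i j, x i ≠ x j)
    (hH : D.IsHermitian) :
    (Finset.univ.filter fun i => 0 < hH.eigenvalues i).card = 1 ∧
    (Finset.univ.filter fun i => hH.eigenvalues i = 0).card = n - D.rank ∧
    (Finset.univ.filter fun i => hH.eigenvalues i < 0).card = D.rank - 1 := by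
  classical
  set μ : Fin n → ℝ := hH.eigenvalues with hμ
  -- trace of D is zero
  have htr0 : D.trace = 0 := by
    rw [hD]
    simp [Matrix.trace, Matrix.diag]
  have htrace : D.trace = ∑ i, μ i := by
    nth_rewrite 1 [hH.spectral_theorem]
    rw [Unitary.conjStarAlgAut_apply]
    rw [Matrix.trace_mul_comm, ← Matrix.mul_assoc]
    have h1 : (star (hH.eigenvectorUnitary : Matrix (Fin n) (Fin n) ℝ)) *
        (hH.eigenvectorUnitary : Matrix (Fin n) (Fin n) ℝ) = 1 := by
      simpa using Unitary.coe_star_mul_self hH.eigenvectorUnitary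
    rw [h1, Matrix.one_mul, Matrix.trace_diagonal]
    simp
    rfl
  have htr : ∑ i, μ i = 0 := by rw [← htrace, htr0]
  -- D is nonzero
  have hne : D ≠ 0 := by
    obtain ⟨i, j, hij⟩ := hx
    intro h
    have : D i j = 0 := by rw [h]; rfl
    rw [hD] at this
    rw [Matrix.of_apply, pow_eq_zero_iff two_ne_zero, norm_eq_zero, sub_eq_zero] at this
    exact hij this
  -- not all eigenvalues are zero
  have hzero : ¬ ∀ i, μ i = 0 := by
    intro hall
    apply hne
    have hst := hH.spectral_theorem
    have hd0 : (RCLike.ofReal ∘ hH.eigenvalues : Fin n → ℝ) = 0 := funext fun i => by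
      simp only [Function.comp_apply, Pi.zero_apply, RCLike.ofReal_eq_zero]
      exact hall i
    rw [hd0] at hst
    have hdg : Matrix.diagonal (0 : Fin n → ℝ) = 0 := Matrix.diagonal_zero
    rw [hdg] at hst
    simpa using hst
  -- dot products of eigenvectors
  have hdot : ∀ p q : Fin n, (⇑(hH.eigenvectorBasis p)) ⬝ᵥ (⇑(hH.eigenvectorBasis q))
      = if p = q then 1 else 0 := by
    intro p q
    have h := hH.eigenvectorBasis.orthonormal
    rw [orthonormal_iff_ite] at h
    have := h p q
    simpa [PiLp.inner_apply, dotProduct, mul_comm] using this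
  -- at most one positive eigenvalue
  have hone : ∀ i j : Fin n, 0 < μ i → 0 < μ j → i = j := by
    intro i j hi hj
    by_contra hij
    set u : Fin n → ℝ := ⇑(hH.eigenvectorBasis i) with hu
    set w : Fin n → ℝ := ⇑(hH.eigenvectorBasis j) with hw
    obtain ⟨a, b, hab, hsum⟩ : ∃ a b : ℝ, ¬(a = 0 ∧ b = 0)
        ∧ a * (∑ k, u k) + b * (∑ k, w k) = 0 := by
      by_cases hs : (∑ k, u k) = 0 ∧ (∑ k, w k) = 0
      · exact ⟨1, 0, by simp, by rw [hs.1, hs.2]; ring⟩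
      · refine ⟨∑ k, w k, -(∑ k, u k), ?_, by ring⟩
        intro h
        exact hs ⟨by simpa using h.2, h.1⟩
    set v : Fin n → ℝ := a • u + b • w with hv
    have hvsum : ∑ k, v k = 0 := by
      simp only [hv, Pi.add_apply, Pi.smul_apply, smul_eq_mul]
      rw [Finset.sum_add_distrib, ← Finset.mul_sum, ← Finset.mul_sum]
      exact hsum
    have hDv : D *ᵥ v = (a * μ i) • u + (b * μ j) • w := by
      rw [hv, Matrix.mulVec_add, Matrix.mulVec_smul, Matrix.mulVec_smul,
        hμ, hu, hw, hH.mulVec_eigenvectorBasis, hH.mulVec_eigenvectorBasis,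
        smul_smul, smul_smul]
    have hQ : v ⬝ᵥ (D *ᵥ v) = a ^ 2 * μ i + b ^ 2 * μ j := by
      rw [hDv, hv]
      simp only [add_dotProduct, dotProduct_add, smul_dotProduct, dotProduct_smul,
        smul_eq_mul, hu, hw, hdot]
      rw [if_neg hij, if_neg (show ¬ j = i from fun h => hij h.symm)]
      simp only [if_true]
      ring
    have hQpos : 0 < v ⬝ᵥ (D *ᵥ v) := by
      rw [hQ]
      rcases not_and_or.mp hab with ha | hb
      · have h1 : 0 < a ^ 2 * μ i := mul_pos (by positivity) hi
        have h2 : 0 ≤ b ^ 2 * μ j := mul_nonneg (by positivity) (le_of_lt hj)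
        linarith
      · have h1 : 0 ≤ a ^ 2 * μ i := mul_nonneg (by positivity) (le_of_lt hi)
        have h2 : 0 < b ^ 2 * μ j := mul_pos (by positivity) hj
        linarith
    have hQnp : v ⬝ᵥ (D *ᵥ v) ≤ 0 := by
      rw [hD]
      exact edm_quadform_nonpos x v hvsum
    linarith
  -- there is a positive eigenvalue
  have hexpos : ∃ k, 0 < μ k := by
    by_contra h
    push_neg at h
    apply hzero
    intro i
    have := (Finset.sum_eq_zero_iff_of_nonpos (fun i _ => h i)).mp htr i (Finset.mem_univ i)
    exact this
  -- there is a negative eigenvalue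
  have hexneg : ∃ m, μ m < 0 := by
    by_contra h
    push_neg at h
    apply hzero
    intro i
    exact (Finset.sum_eq_zero_iff_of_nonneg (fun i _ => h i)).mp htr i (Finset.mem_univ i)
  obtain ⟨k, hk⟩ := hexpos
  obtain ⟨m, hm⟩ := hexneg
  -- exactly one positive eigenvalue
  have hP : (Finset.univ.filter fun i => 0 < μ i) = {k} := by
    ext p
    simp only [Finset.mem_filter, Finset.mem_univ, true_and, Finset.mem_singleton]
    constructor
    · intro hp; exact hone p k hp hk
    · intro hp; rw [hp]; exact hk
  have hPcard : (Finset.univ.filter fun i => 0 < μ i).card = 1 := by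
    rw [hP]; rfl
  -- rank equals number of nonzero eigenvalues
  have hrank : D.rank = (Finset.univ.filter fun i => μ i ≠ 0).card := by
    rw [hH.rank_eq_card_non_zero_eigs, Fintype.card_subtype]
  -- split nonzeros into positives and negatives
  have hsplit : (Finset.univ.filter fun i => μ i ≠ 0)
      = (Finset.univ.filter fun i => 0 < μ i) ∪ (Finset.univ.filter fun i => μ i < 0) := by
    ext p
    simp only [Finset.mem_filter, Finset.mem_univ, true_and, Finset.mem_union]
    constructor
    · intro hp; rcases lt_or_gt_of_ne hp with h | h
      · exact Or.inr h
      · exact Or.inl h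
    · rintro (h | h)
      · exact ne_of_gt h
      · exact ne_of_lt h
  have hdisj : Disjoint (Finset.univ.filter fun i => 0 < μ i)
      (Finset.univ.filter fun i => μ i < 0) := by
    rw [Finset.disjoint_filter]
    intro p _ hp
    exact not_lt_of_gt hp
  have hcardsplit : D.rank = 1 + (Finset.univ.filter fun i => μ i < 0).card := by
    rw [hrank, hsplit, Finset.card_union_of_disjoint hdisj, hPcard]
  -- zeros
  have hZ : (Finset.univ.filter fun i => μ i = 0)
      = Finset.univ \ (Finset.univ.filter fun i => μ i ≠ 0) := by
    ext p
    simp [Finset.mem_filter, Finset.mem_sdiff]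
  have hZcard : (Finset.univ.filter fun i => μ i = 0).card = n - D.rank := by
    rw [hZ, Finset.card_sdiff_of_subset (Finset.filter_subset _ _), hrank]
    simp
  refine ⟨hPcard, hZcard, ?_⟩
  omega
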